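/- Consider n points in ℝ^d whose coordinates are generated by d independent, uniformly random permutations σ_1, …, σ_d of {1, …, n} (point p_i has j-th coordinate σ_j(i)), and let k, τ be positive integers. Then for every fixed index i with τ + 1 ≤ i ≤ n, the probability that fewer than k of the points p_{i−τ}, …, p_{i−1} dominate p_i equals A(τ+1, d)/(τ+1), where A(τ+1, d) is the expected size of the k-skyband of τ+1 points in ℝ^d whose coordinates are generated by d independent, uniformly random permutations of {1, …, τ+1}. -/

import Mathlib

/-- In the random coordinate-permutation model, the `j`-th coordinate of the
(1-based) point `i` is `σ j ⟨i-1⟩`. -/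
def coordOf {n d : ℕ} (σ : Fin d → Equiv.Perm (Fin n)) (j : Fin d) (i : ℕ) : ℕ :=
  if h : i - 1 < n then ((σ j) ⟨i - 1, h⟩ : ℕ) else 0

/-- Point `a` dominates point `b`: every coordinate of `a` is strictly larger. -/
def Dominates {n d : ℕ} (σ : Fin d → Equiv.Perm (Fin n)) (a b : ℕ) : Prop :=
  ∀ j : Fin d, coordOf σ j b < coordOf σ j a

instance {n d : ℕ} (σ : Fin d → Equiv.Perm (Fin n)) (a b : ℕ) :
    Decidable (Dominates σ a b) :=
  inferInstanceAs (Decidable (∀ j : Fin d, coordOf σ j b < coordOf σ j a))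

/-- The size of the `k`-skyband of the `m` points determined by `σ`. -/
def skybandSize {m d : ℕ} (k : ℕ) (σ : Fin d → Equiv.Perm (Fin m)) : ℕ :=
  ((Finset.Icc 1 m).filter (fun i =>
    ((Finset.Icc 1 m).filter (fun a => Dominates σ a i)).card < k)).card

/-- `A k m d`: the expected size of the `k`-skyband of `m` points in `ℝ^d` whose
coordinates are generated by `d` independent uniformly random permutations of
`{1, …, m}`. -/
noncomputable def A (k m d : ℕ) : ℝ :=
  (∑ σ : Fin d → Equiv.Perm (Fin m), (skybandSize k σ : ℝ))
    / (Fintype.card (Fin d → Equiv.Perm (Fin m)) : ℝ)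


open Finset Equiv

section Pat

variable {n m : ℕ}

/-- the image finset of `α ∘ f` -/
private def patSet (f : Fin m ↪ Fin n) (α : Perm (Fin n)) : Finset (Fin n) :=
  Finset.univ.map (f.trans α.toEmbedding)

private lemma patSet_card (f : Fin m ↪ Fin n) (α : Perm (Fin n)) :
    (patSet f α).card = m := by simp [patSet]

private lemma mem_patSet (f : Fin m ↪ Fin n) (α : Perm (Fin n)) (t : Fin m) :
    α (f t) ∈ patSet f α := by
  simp [patSet, Function.Embedding.trans]

/-- the order pattern of `α` on the embedded points -/
noncomputable def pat (f : Fin m ↪ Fin n) (α : Perm (Fin n)) : Perm (Fin m) :=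
  (Equiv.ofBijective (fun t => (⟨α (f t), mem_patSet f α t⟩ : patSet f α))
    (by
      refine (Fintype.bijective_iff_injective_and_card _).2 ⟨?_, by simp [patSet_card]⟩
      intro a b hab
      exact f.injective (α.injective (congrArg Subtype.val hab))
      )).trans ((patSet f α).orderIsoOfFin (patSet_card f α)).symm.toEquiv

lemma pat_lt_iff (f : Fin m ↪ Fin n) (α : Perm (Fin n)) (t₁ t₂ : Fin m) :
    pat f α t₁ < pat f α t₂ ↔ α (f t₁) < α (f t₂) := by
  unfold pat
  simp only [Equiv.trans_apply]
  rw [show ((((patSet f α).orderIsoOfFin (patSet_card f α)).symm.toEquiv : _ → _))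
      = ⇑(((patSet f α).orderIsoOfFin (patSet_card f α)).symm) from rfl]
  rw [OrderIso.lt_iff_lt]
  simp [Equiv.ofBijective, Subtype.mk_lt_mk]

end Pat

section Pat2
variable {n m : ℕ}

lemma pat_unique (f : Fin m ↪ Fin n) (α : Perm (Fin n)) (ρ : Perm (Fin m))
    (h : ∀ t₁ t₂, ρ t₁ < ρ t₂ ↔ α (f t₁) < α (f t₂)) : ρ = pat f α := by
  have key : ∀ t₁ t₂ : Fin m, ρ t₁ < ρ t₂ ↔ pat f α t₁ < pat f α t₂ := fun t₁ t₂ =>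
    (h t₁ t₂).trans (pat_lt_iff f α t₁ t₂).symm
  have hmono : ∀ a b : Fin m, (ρ.symm.trans (pat f α)) a ≤ (ρ.symm.trans (pat f α)) b ↔ a ≤ b := by
    intro a b
    simp only [Equiv.trans_apply]
    rw [← not_lt, ← not_lt, ← key (ρ.symm b) (ρ.symm a)]
    simp
  let φ : Fin m ≃o Fin m := ⟨ρ.symm.trans (pat f α), hmono _ _⟩
  have : φ = OrderIso.refl (Fin m) := Subsingleton.elim _ _
  ext t
  have h2 := congrArg (fun (e : Fin m ≃o Fin m) => e (ρ t)) this
  simp only [OrderIso.refl_apply] at h2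
  have h3 : pat f α t = ρ t := by simpa [φ] using h2
  exact congrArg Fin.val h3.symm

lemma pat_mul_via (f : Fin m ↪ Fin n) (α : Perm (Fin n)) (π : Perm (Fin m)) :
    pat f (α * π.viaEmbedding f) = pat f α * π := by
  refine (pat_unique f _ _ ?_).symm
  intro t₁ t₂
  simp only [Perm.mul_apply, Perm.viaEmbedding_apply]
  exact pat_lt_iff f α (π t₁) (π t₂)

lemma fiber_card (f : Fin m ↪ Fin n) (β : Perm (Fin m)) :
    (univ.filter fun α => pat f α = β).card = (univ.filter fun α => pat f α = 1).card := by
  refine Finset.card_nbij' (fun α => α * β⁻¹.viaEmbedding f) (fun α => α * β.viaEmbedding f)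
    ?_ ?_ ?_ ?_
  · intro α hα
    simp only [Finset.mem_coe, mem_filter, mem_univ, true_and] at hα ⊢
    rw [pat_mul_via, hα, mul_inv_cancel]
  · intro α hα
    simp only [Finset.mem_coe, mem_filter, mem_univ, true_and] at hα ⊢
    rw [pat_mul_via, hα, one_mul]
  · intro α hα
    simp only [mul_assoc]
    rw [← Perm.viaEmbeddingHom_apply, ← Perm.viaEmbeddingHom_apply, ← map_mul]
    simp
  · intro α hα
    simp only [mul_assoc]
    rw [← Perm.viaEmbeddingHom_apply, ← Perm.viaEmbeddingHom_apply, ← map_mul]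
    simp

lemma card_filter_pat_pi {d : ℕ} (f : Fin m ↪ Fin n)
    (Q : (Fin d → Perm (Fin m)) → Prop) [DecidablePred Q] :
    (univ.filter fun σ : Fin d → Perm (Fin n) => Q (fun j => pat f (σ j))).card
      = (univ.filter fun α : Perm (Fin n) => pat f α = 1).card ^ d
        * (univ.filter Q).card := by
  set c := (univ.filter fun α : Perm (Fin n) => pat f α = 1).card
  rw [Finset.card_eq_sum_card_fiberwise
    (f := fun σ : Fin d → Perm (Fin n) => fun j => pat f (σ j)) (t := univ.filter Q)
    (fun σ hσ => by simpa using (mem_filter.1 hσ).2)]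
  have hfib : ∀ β ∈ univ.filter Q,
      ((univ.filter fun σ : Fin d → Perm (Fin n) => Q (fun j => pat f (σ j))).filter
        (fun σ => (fun j => pat f (σ j)) = β)).card = c ^ d := by
    intro β hβ
    have hQβ : Q β := (mem_filter.1 hβ).2
    have h1 : ((univ.filter fun σ : Fin d → Perm (Fin n) => Q (fun j => pat f (σ j))).filter
        (fun σ => (fun j => pat f (σ j)) = β))
        = Fintype.piFinset (fun j => univ.filter fun α => pat f α = β j) := by
      ext σ
      simp only [mem_filter, mem_univ, true_and, Fintype.mem_piFinset, funext_iff]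
      constructor
      · rintro ⟨-, h⟩ j; exact h j
      · intro h; exact ⟨by rw [show (fun j => pat f (σ j)) = β from funext h]; exact hQβ, h⟩
    rw [h1, Fintype.card_piFinset]
    simp only [fiber_card f]
    rw [Finset.prod_const, Finset.card_univ, Fintype.card_fin]
  rw [Finset.sum_congr rfl hfib, Finset.sum_const, smul_eq_mul, mul_comm]

lemma card_perm_eq (f : Fin m ↪ Fin n) :
    Fintype.card (Perm (Fin n))
      = (univ.filter fun α : Perm (Fin n) => pat f α = 1).card
        * Fintype.card (Perm (Fin m)) := by
  have := card_filter_pat_pi (d := 1) f (fun _ => True)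
  simp only [filter_true, Finset.card_univ, pow_one] at this
  simpa [Fintype.card_fun] using this

lemma fiber_one_pos (f : Fin m ↪ Fin n) (hmono : StrictMono f) :
    0 < (univ.filter fun α : Perm (Fin n) => pat f α = 1).card := by
  refine Finset.card_pos.2 ⟨1, ?_⟩
  simp only [mem_filter, mem_univ, true_and]
  refine (pat_unique f 1 1 ?_).symm
  intro t₁ t₂
  simp [hmono.lt_iff_lt]

end Pat2

section Main

lemma coordOf_eq {n d : ℕ} (σ : Fin d → Perm (Fin n)) (j : Fin d) {x : ℕ} (h : x - 1 < n) :
    coordOf σ j x = σ j ⟨x - 1, h⟩ := dif_pos h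

/-- counting skyband membership for one point is the same for every point, by symmetry -/
lemma count_point_card (k τ d : ℕ) (p : ℕ) (hp1 : 1 ≤ p) (hp2 : p ≤ τ + 1) :
    (univ.filter fun β : Fin d → Perm (Fin (τ+1)) =>
        ((Finset.Icc 1 (τ+1)).filter (fun a => Dominates β a p)).card < k).card
      = (univ.filter fun β : Fin d → Perm (Fin (τ+1)) =>
        ((Finset.Icc 1 (τ+1)).filter (fun a => Dominates β a (τ+1))).card < k).card := by
  have hpτ : p - 1 < τ + 1 := by omega
  have hττ : τ < τ + 1 := by omega
  set π : Perm (Fin (τ+1)) := Equiv.swap ⟨p-1, hpτ⟩ ⟨τ, hττ⟩ with hπ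
  have hcount : ∀ β : Fin d → Perm (Fin (τ+1)),
      ((Finset.Icc 1 (τ+1)).filter (fun a => Dominates (fun j => β j * π) a (τ+1))).card
        = ((Finset.Icc 1 (τ+1)).filter (fun a => Dominates β a p)).card := by
    intro β
    have key : ∀ (a : ℕ) (ha : a - 1 < τ + 1),
        Dominates (fun j => β j * π) a (τ+1) ↔
          ∀ j, (β j ⟨p-1, hpτ⟩ : ℕ) < β j (π ⟨a-1, ha⟩) := by
      intro a ha
      unfold Dominates
      refine forall_congr' fun j => ?_
      rw [coordOf_eq _ j (show (τ+1) - 1 < τ + 1 by omega),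
          coordOf_eq _ j (show a - 1 < τ + 1 from ha)]
      simp only [Perm.mul_apply]
      have h1 : π ⟨(τ+1)-1, by omega⟩ = ⟨p-1, hpτ⟩ := by
        have : (⟨(τ+1)-1, by omega⟩ : Fin (τ+1)) = ⟨τ, hττ⟩ := by ext; simp
        rw [this, hπ, Equiv.swap_apply_right]
      rw [h1]
    refine Finset.card_bij'
      (fun a ha => ((π ⟨a-1, by simp [Finset.mem_Icc] at ha; omega⟩ : Fin (τ+1)) : ℕ) + 1)
      (fun a ha => ((π ⟨a-1, by simp [Finset.mem_Icc] at ha; omega⟩ : Fin (τ+1)) : ℕ) + 1)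
      ?_ ?_ ?_ ?_
    · intro a ha
      simp only [Finset.mem_filter, Finset.mem_Icc] at ha ⊢
      obtain ⟨⟨ha1, ha2⟩, hdom⟩ := ha
      have hlt : a - 1 < τ + 1 := by omega
      refine ⟨⟨by omega, by have := (π ⟨a-1, hlt⟩).isLt; omega⟩, ?_⟩
      intro j
      have := (key a hlt).1 hdom j
      rw [coordOf_eq _ j (show p - 1 < τ + 1 from hpτ),
          coordOf_eq _ j (show (π ⟨a-1, hlt⟩ : ℕ) + 1 - 1 < τ + 1 by
            have := (π ⟨a-1, hlt⟩).isLt; omega)]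
      have heq : (⟨(π ⟨a-1, hlt⟩ : ℕ) + 1 - 1, by have := (π ⟨a-1, hlt⟩).isLt; omega⟩ :
          Fin (τ+1)) = π ⟨a-1, hlt⟩ := by ext; simp
      rw [heq]
      exact this
    · intro a ha
      simp only [Finset.mem_filter, Finset.mem_Icc] at ha ⊢
      obtain ⟨⟨ha1, ha2⟩, hdom⟩ := ha
      have hlt : a - 1 < τ + 1 := by omega
      refine ⟨⟨by omega, by have := (π ⟨a-1, hlt⟩).isLt; omega⟩, ?_⟩
      have hb : ((π ⟨a-1, hlt⟩ : ℕ) + 1) - 1 < τ + 1 := by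
        have := (π ⟨a-1, hlt⟩).isLt; omega
      refine (key _ hb).2 ?_
      intro j
      have heq : (⟨(π ⟨a-1, hlt⟩ : ℕ) + 1 - 1, hb⟩ : Fin (τ+1)) = π ⟨a-1, hlt⟩ := by ext; simp
      rw [heq, Equiv.swap_apply_self]
      have := hdom j
      rw [coordOf_eq _ j (show p - 1 < τ + 1 from hpτ),
          coordOf_eq _ j (show a - 1 < τ + 1 from hlt)] at this
      exact this
    · intro a ha
      simp only [Finset.mem_filter, Finset.mem_Icc] at ha
      obtain ⟨⟨ha1, ha2⟩, -⟩ := ha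
      have hlt : a - 1 < τ + 1 := by omega
      have heq : ∀ (h : _), (⟨(π ⟨a-1, hlt⟩ : ℕ) + 1 - 1, h⟩ : Fin (τ+1)) = π ⟨a-1, hlt⟩ := by
        intro h; ext; simp
      simp only [heq]
      have hs : π (π ⟨a - 1, hlt⟩) = ⟨a - 1, hlt⟩ := by
        rw [hπ]; exact Equiv.swap_apply_self _ _ _
      rw [hs]
      have hv : ((⟨a - 1, hlt⟩ : Fin (τ+1)) : ℕ) = a - 1 := rfl
      omega
    · intro a ha
      simp only [Finset.mem_filter, Finset.mem_Icc] at ha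
      obtain ⟨⟨ha1, ha2⟩, -⟩ := ha
      have hlt : a - 1 < τ + 1 := by omega
      have heq : ∀ (h : _), (⟨(π ⟨a-1, hlt⟩ : ℕ) + 1 - 1, h⟩ : Fin (τ+1)) = π ⟨a-1, hlt⟩ := by
        intro h; ext; simp
      simp only [heq]
      have hs : π (π ⟨a - 1, hlt⟩) = ⟨a - 1, hlt⟩ := by
        rw [hπ]; exact Equiv.swap_apply_self _ _ _
      rw [hs]
      have hv : ((⟨a - 1, hlt⟩ : Fin (τ+1)) : ℕ) = a - 1 := rfl
      omega
  refine Finset.card_nbij' (fun β => fun j => β j * π) (fun β => fun j => β j * π) ?_ ?_ ?_ ?_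
  · intro β hβ
    simp only [Finset.mem_coe, Finset.mem_filter, Finset.mem_univ, true_and] at hβ ⊢
    rw [hcount]; exact hβ
  · intro β hβ
    simp only [Finset.mem_coe, Finset.mem_filter, Finset.mem_univ, true_and] at hβ ⊢
    have := hcount (fun j => β j * π)
    have hππ : (fun j => (β j * π) * π) = β := by
      funext j; rw [mul_assoc, hπ, Equiv.swap_mul_self, mul_one]
    rw [hππ] at this
    rw [← this]; exact hβ
  · intro β hβ
    funext j
    show (β j * π) * π = β j
    rw [mul_assoc, hπ, Equiv.swap_mul_self, mul_one]
  · intro β hβ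
    funext j
    show (β j * π) * π = β j
    rw [mul_assoc, hπ, Equiv.swap_mul_self, mul_one]

lemma sum_skyband_eq (k τ d : ℕ) :
    ∑ β : Fin d → Perm (Fin (τ+1)), skybandSize k β
      = (τ+1) * (univ.filter fun β : Fin d → Perm (Fin (τ+1)) =>
          ((Finset.Icc 1 (τ+1)).filter (fun a => Dominates β a (τ+1))).card < k).card := by
  have h1 : ∀ β : Fin d → Perm (Fin (τ+1)), skybandSize k β
      = ∑ p ∈ Finset.Icc 1 (τ+1),
          if ((Finset.Icc 1 (τ+1)).filter (fun a => Dominates β a p)).card < k then 1 else 0 := by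
    intro β; rw [skybandSize, Finset.card_filter]
  rw [Finset.sum_congr rfl (fun β _ => h1 β), Finset.sum_comm]
  have h2 : ∀ p ∈ Finset.Icc 1 (τ+1),
      (∑ β : Fin d → Perm (Fin (τ+1)),
        if ((Finset.Icc 1 (τ+1)).filter (fun a => Dominates β a p)).card < k then 1 else 0)
      = (univ.filter fun β : Fin d → Perm (Fin (τ+1)) =>
          ((Finset.Icc 1 (τ+1)).filter (fun a => Dominates β a (τ+1))).card < k).card := by
    intro p hp
    rw [← Finset.card_filter]
    simp only [Finset.mem_Icc] at hp
    exact count_point_card k τ d p hp.1 hp.2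
  rw [Finset.sum_congr rfl h2, Finset.sum_const, Nat.card_Icc, smul_eq_mul]
  congr 1

end Main

set_option maxHeartbeats 2000000 in
theorem prob_durable_skyband (n d k τ : ℕ)
    (hn : 0 < n) (hd : 0 < d) (hk : 0 < k) (hτ : 0 < τ)
    (i : ℕ) (hi1 : τ + 1 ≤ i) (hi2 : i ≤ n) :
    ((Finset.univ.filter (fun σ : Fin d → Equiv.Perm (Fin n) =>
        ((Finset.Icc (i - τ) (i - 1)).filter (fun a => Dominates σ a i)).card < k)).card : ℝ)
      / (Fintype.card (Fin d → Equiv.Perm (Fin n)) : ℝ)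
    = A k (τ + 1) d / ((τ : ℝ) + 1) := by
  classical
  have hbound : ∀ t : Fin (τ+1), i - τ - 1 + t.val < n := by
    intro t; have := t.isLt; omega
  set f : Fin (τ+1) ↪ Fin n := ⟨fun t => ⟨i - τ - 1 + t.val, hbound t⟩, by
    intro a b hab
    have := congrArg Fin.val hab
    simp only at this
    exact Fin.ext (by omega)⟩ with hf
  have hfval : ∀ t : Fin (τ+1), (f t : ℕ) = i - τ - 1 + t.val := fun t => rfl
  have hfmono : StrictMono f := by
    intro a b hab
    rw [Fin.lt_def, hfval, hfval]
    have : a.val < b.val := hab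
    omega
  have key : ∀ (σ : Fin d → Perm (Fin n)) (b : ℕ), 1 ≤ b → b ≤ τ →
      (Dominates (fun j => pat f (σ j)) b (τ+1) ↔ Dominates σ (b + (i - τ - 1)) i) := by
    intro σ b hb1 hb2
    unfold Dominates
    refine forall_congr' fun j => ?_
    have hb : b - 1 < τ + 1 := by omega
    have hτ1 : (τ+1) - 1 < τ + 1 := by omega
    have hi' : i - 1 < n := by omega
    have ha : b + (i - τ - 1) - 1 < n := by omega
    rw [coordOf_eq _ j hτ1, coordOf_eq _ j hb, coordOf_eq _ j hi', coordOf_eq _ j ha]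
    have h1 : (pat f (σ j)) ⟨(τ+1)-1, hτ1⟩ < (pat f (σ j)) ⟨b-1, hb⟩ ↔
        σ j (f ⟨(τ+1)-1, hτ1⟩) < σ j (f ⟨b-1, hb⟩) := pat_lt_iff f (σ j) _ _
    have hfa : f ⟨(τ+1)-1, hτ1⟩ = ⟨i-1, hi'⟩ := by
      refine Fin.ext ?_
      rw [hfval]
      simp only
      omega
    have hfb : f ⟨b-1, hb⟩ = ⟨b + (i - τ - 1) - 1, ha⟩ := by
      refine Fin.ext ?_
      rw [hfval]
      simp only
      omega
    rw [hfa, hfb] at h1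
    rw [Fin.lt_def, Fin.lt_def] at h1
    exact h1
  have h_ev : ∀ σ : Fin d → Perm (Fin n),
      ((Finset.Icc (i-τ) (i-1)).filter (fun a => Dominates σ a i)).card
        = ((Finset.Icc 1 (τ+1)).filter
            (fun a => Dominates (fun j => pat f (σ j)) a (τ+1))).card := by
    intro σ
    symm
    refine Finset.card_bij' (fun b _ => b + (i - τ - 1)) (fun a _ => a - (i - τ - 1))
      ?_ ?_ ?_ ?_
    · intro b hb
      simp only [Finset.mem_filter, Finset.mem_Icc] at hb ⊢
      obtain ⟨⟨hb1, hb2⟩, hdom⟩ := hb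
      have hbτ : b ≤ τ := by
        by_contra h
        have hbeq : b = τ + 1 := by omega
        subst hbeq
        exact lt_irrefl _ (hdom ⟨0, hd⟩)
      exact ⟨⟨by omega, by omega⟩, (key σ b hb1 hbτ).1 hdom⟩
    · intro a ha
      simp only [Finset.mem_filter, Finset.mem_Icc] at ha ⊢
      obtain ⟨⟨ha1, ha2⟩, hdom⟩ := ha
      have h1 : 1 ≤ a - (i - τ - 1) := by omega
      have h2 : a - (i - τ - 1) ≤ τ := by omega
      refine ⟨⟨by omega, by omega⟩, (key σ _ h1 h2).2 ?_⟩
      have heq : a - (i - τ - 1) + (i - τ - 1) = a := by omega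
      rw [heq]; exact hdom
    · intro b hb
      simp only [Finset.mem_filter, Finset.mem_Icc] at hb
      show b + (i - τ - 1) - (i - τ - 1) = b
      omega
    · intro a ha
      simp only [Finset.mem_filter, Finset.mem_Icc] at ha
      show a - (i - τ - 1) + (i - τ - 1) = a
      omega
  set c := (univ.filter fun α : Perm (Fin n) => pat f α = 1).card with hc
  set M := Fintype.card (Perm (Fin (τ+1))) with hM
  have hnum : (univ.filter (fun σ : Fin d → Perm (Fin n) =>
      ((Finset.Icc (i-τ) (i-1)).filter (fun a => Dominates σ a i)).card < k)).card
      = c ^ d * (univ.filter (fun β : Fin d → Perm (Fin (τ+1)) =>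
          ((Finset.Icc 1 (τ+1)).filter (fun a => Dominates β a (τ+1))).card < k)).card := by
    have hfe : (univ.filter (fun σ : Fin d → Perm (Fin n) =>
        ((Finset.Icc (i-τ) (i-1)).filter (fun a => Dominates σ a i)).card < k))
        = (univ.filter fun σ : Fin d → Perm (Fin n) =>
            ((Finset.Icc 1 (τ+1)).filter
              (fun a => Dominates (fun j => pat f (σ j)) a (τ+1))).card < k) := by
      refine Finset.filter_congr fun σ _ => by rw [h_ev σ]
    rw [hfe, hc]
    exact card_filter_pat_pi f (fun β => ((Finset.Icc 1 (τ+1)).filter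
      (fun a => Dominates β a (τ+1))).card < k)
  have hden : Fintype.card (Fin d → Perm (Fin n)) = (c * M) ^ d := by
    rw [Fintype.card_fun, Fintype.card_fin, card_perm_eq f, ← hc, ← hM]
  have hA : A k (τ+1) d = (((τ+1) * (univ.filter (fun β : Fin d → Perm (Fin (τ+1)) =>
          ((Finset.Icc 1 (τ+1)).filter (fun a => Dominates β a (τ+1))).card < k)).card : ℕ) : ℝ) / ((M ^ d : ℕ) : ℝ) := by
    rw [A]
    congr 1
    · rw [← Nat.cast_sum, sum_skyband_eq k τ d]
    · have hcard : Fintype.card (Fin d → Perm (Fin (τ+1))) = M ^ d := by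
        rw [Fintype.card_fun, Fintype.card_fin, hM]
      rw [hcard]
  rw [hnum, hden, hA]
  have hc0 : (0:ℝ) < (c : ℝ) := by
    have := fiber_one_pos f hfmono
    rw [← hc] at this
    exact_mod_cast this
  have hM0 : (0:ℝ) < (M : ℝ) := by
    have : 0 < M := hM ▸ Fintype.card_pos
    exact_mod_cast this
  have hτ0 : (0:ℝ) < (τ:ℝ) + 1 := by positivity
  push_cast
  rw [mul_pow]
  field_simp
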